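/- Let A be a unital C*-algebra with unit e and let a, b be unitary elements of A (a*a = aa* = b*b = bb* = e). For any x ∈ A, the 3×3 matrix Q over A with rows (e, a, x), (a*, e, b), (x*, b*, e) is a positive element of the C*-algebra M₃(A) if and only if x = ab. -/
import Mathlib

open Matrix

/-- In the C*-algebra `Mₙ(A)` of matrices over a C*-algebra `A`
(with star = conjugate transpose), an element `Q` is positive iff it can be
written as `yᴴ * y` for some matrix `y`.  We use this exact characterization
as the definition of membership in the positive cone of `Mₙ(A)`. -/
def Matrix.IsPositive {A : Type*} [CStarAlgebra A] {n : ℕ}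
    (Q : Matrix (Fin n) (Fin n) A) : Prop :=
  ∃ y : Matrix (Fin n) (Fin n) A, Q = yᴴ * y

/-- For any matrix `y` and vector `w`, the "quadratic form" of `yᴴ * y` at `w`
is nonnegative, being a sum of elements of the form `star c * c`. -/
lemma aux_nonneg {A : Type*} [CStarAlgebra A] [PartialOrder A] [StarOrderedRing A] {n : ℕ}
    (y : Matrix (Fin n) (Fin n) A) (w : Fin n → A) :
    0 ≤ ∑ i, ∑ j, star (w i) * (yᴴ * y) i j * w j := by
  have hk : ∀ k, star (∑ i, y k i * w i) * (∑ j, y k j * w j)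
      = ∑ i, ∑ j, star (w i) * (star (y k i) * y k j) * w j := by
    intro k
    rw [star_sum, Finset.sum_mul]
    refine Finset.sum_congr rfl fun i _ => ?_
    rw [Finset.mul_sum]
    refine Finset.sum_congr rfl fun j _ => ?_
    simp [StarMul.star_mul, mul_assoc]
  have key : ∑ i, ∑ j, star (w i) * (yᴴ * y) i j * w j
      = ∑ k, star (∑ i, y k i * w i) * (∑ j, y k j * w j) := by
    simp only [hk, Matrix.mul_apply, Matrix.conjTranspose_apply, Finset.mul_sum,
      Finset.sum_mul]
    rw [show (∑ i, ∑ j, ∑ k, star (w i) * (star (y k i) * y k j) * w j)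
        = ∑ i, ∑ k, ∑ j, star (w i) * (star (y k i) * y k j) * w j from
      Finset.sum_congr rfl fun i _ => Finset.sum_comm, Finset.sum_comm]
  rw [key]
  exact Finset.sum_nonneg fun k _ => star_mul_self_nonneg _

set_option maxHeartbeats 1000000 in
theorem stmt_0 {A : Type*} [CStarAlgebra A] (a b x : A)
    (ha : star a * a = 1 ∧ a * star a = 1)
    (hb : star b * b = 1 ∧ b * star b = 1) :
    Matrix.IsPositive !![1, a, x; star a, 1, b; star x, star b, 1] ↔ x = a * b := by
  constructor
  · rintro ⟨y, hy⟩
    let _ : PartialOrder A := CStarAlgebra.spectralOrder A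
    have _ : StarOrderedRing A := CStarAlgebra.spectralOrderedRing A
    set z := x - a * b with hz
    have h1 := aux_nonneg y ![1, -star a, -star z]
    rw [← hy] at h1
    have hE : ∑ i, ∑ j, star ((![1, -star a, -star z]) i)
          * (!![1, a, x; star a, 1, b; star x, star b, 1]) i j
          * ((![1, -star a, -star z]) j) = -(z * star z) := by
      simp [Fin.sum_univ_three, Matrix.vecHead, Matrix.vecTail, mul_sub, sub_mul,
        mul_add, add_mul]
      rw [ha.2, hz]
      simp only [star_sub, StarMul.star_mul]
      noncomm_ring
    rw [hE] at h1
    have h2 : z * star z = 0 :=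
      le_antisymm (by simpa using neg_nonneg.mp (by simpa using h1)) (mul_star_self_nonneg z)
    have h3 : z = 0 := CStarRing.mul_star_self_eq_zero_iff z |>.mp h2
    have := sub_eq_zero.mp (hz ▸ h3)
    exact this
  · rintro rfl
    refine ⟨!![1, a, a * b; 0, 0, 0; 0, 0, 0], ?_⟩
    have ha1 : ∀ c : A, star a * (a * c) = c := fun c => by rw [← mul_assoc, ha.1, one_mul]
    have hyT : (!![1, a, a * b; 0, 0, 0; 0, 0, 0] : Matrix (Fin 3) (Fin 3) A)ᴴ
        = !![1, 0, 0; star a, 0, 0; star (a * b), 0, 0] := by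
      ext i j
      fin_cases i <;> fin_cases j <;>
        simp [Matrix.conjTranspose_apply, Matrix.vecHead, Matrix.vecTail]
    rw [hyT, Matrix.mul_fin_three]
    simp [StarMul.star_mul, mul_assoc, ha1, ha.1, hb.1]
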